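/- Assume λθ > Nμ. The derivative of Δ_cr(δ) satisfies dΔ_cr/dδ(0) = 1 and dΔ_cr/dδ(δ) → -∞ as δ → (N/(λθ))⁻; consequently there exists δ_max ∈ (0, N/(λθ)) at which Δ_cr attains its maximum on [0, N/(λθ)), characterized by sqrt(N² - δ_max²λ²θ²)/(1+δ_max μ) = (δ_max λ²θ²/sqrt(λ²θ² - N²μ²)) · arccos(-(δ_max λ²θ² + N²μ)/(Nλθ(1+δ_max μ))). -/

import Mathlib

open Real Set Filter Topology

noncomputable def Dcr (lam mu th : ℝ) (N : ℕ) (d : ℝ) : ℝ :=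
  Real.arccos (-(d * lam^2 * th^2 + (N : ℝ)^2 * mu) / ((N : ℝ) * lam * th * (1 + d * mu))) *
    Real.sqrt (((N : ℝ)^2 - d^2 * lam^2 * th^2) / (lam^2 * th^2 - (N : ℝ)^2 * mu^2))

lemma Dcr_hasDerivAt (lam mu th : ℝ) (N : ℕ) (hN : 0 < N)
    (hlam : 0 < lam) (hmu : 0 < mu) (hth : 0 < th)
    (hgt : lam * th > N * mu) (d : ℝ)
    (hd1 : -(1/mu) < d) (hd1' : -((N:ℝ)/(lam*th)) < d) (hd2 : d < (N:ℝ)/(lam*th)) :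
    HasDerivAt (Dcr lam mu th N)
      (1/(1+d*mu) - d * lam^2 * th^2 * Dcr lam mu th N d / ((N:ℝ)^2 - d^2*lam^2*th^2)) d := by
  have hb : 0 < lam * th := mul_pos hlam hth
  have hNpos : (0:ℝ) < N := Nat.cast_pos.mpr hN
  have hv : 0 < 1 + d * mu := by
    have h0 : (-(1/mu)) * mu < d * mu := mul_lt_mul_of_pos_right hd1 hmu
    have h0' : (-(1/mu)) * mu = -1 := by field_simp
    linarith
  have hw : (0:ℝ) < (N:ℝ) * lam * th * (1 + d * mu) := by positivity
  have h1 : d * (lam * th) < N := (lt_div_iff₀ hb).mp hd2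
  have h2 : -(N:ℝ) < d * (lam * th) := by
    have : (-(N:ℝ))/(lam*th) < d := by rw [neg_div]; exact hd1'
    have := (div_lt_iff₀ hb).mp this
    linarith
  have hh : 0 < (N:ℝ)^2 - d^2 * lam^2 * th^2 := by nlinarith
  have hK : 0 < lam^2 * th^2 - (N:ℝ)^2 * mu^2 := by nlinarith [mul_pos hNpos hmu]
  have hnum1 : d * lam^2 * th^2 + (N:ℝ)^2 * mu < (N:ℝ) * lam * th * (1 + d * mu) := by
    nlinarith [mul_pos (sub_pos.mpr hgt) (by linarith : (0:ℝ) < (N:ℝ) - d * (lam*th))]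
  have hnum2 : -((N:ℝ) * lam * th * (1 + d * mu)) < d * lam^2 * th^2 + (N:ℝ)^2 * mu := by
    nlinarith [mul_pos (by positivity : (0:ℝ) < lam*th + (N:ℝ)*mu) (by linarith : (0:ℝ) < (N:ℝ) + d * (lam*th))]
  set x : ℝ := -(d * lam^2 * th^2 + (N : ℝ)^2 * mu) / ((N : ℝ) * lam * th * (1 + d * mu)) with hx
  have hxlt : x < 1 := by
    rw [hx, div_lt_one hw]; linarith
  have hxgt : -1 < x := by
    rw [hx, neg_div, neg_lt_neg_iff, div_lt_one hw]; exact hnum1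
  have hu : HasDerivAt (fun d : ℝ => -(d * lam^2 * th^2 + (N:ℝ)^2 * mu)) (-(lam^2*th^2)) d := by
    exact ((((hasDerivAt_id' d).mul_const (lam^2)).mul_const (th^2)).add_const ((N:ℝ)^2*mu)).neg.congr_deriv (by ring)
  have hwd : HasDerivAt (fun d : ℝ => (N:ℝ) * lam * th * (1 + d * mu)) ((N:ℝ)*lam*th*mu) d := by
    simpa using (((hasDerivAt_id d).mul_const mu).const_add 1).const_mul ((N:ℝ)*lam*th)
  have hg : HasDerivAt (fun d : ℝ => -(d * lam^2 * th^2 + (N:ℝ)^2 * mu) / ((N:ℝ) * lam * th * (1 + d * mu)))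
      ((-(lam^2*th^2) * ((N:ℝ) * lam * th * (1 + d * mu)) - -(d * lam^2 * th^2 + (N:ℝ)^2 * mu) * ((N:ℝ)*lam*th*mu)) / ((N:ℝ) * lam * th * (1 + d * mu))^2) d :=
    hu.div hwd hw.ne'
  have hA : HasDerivAt (fun d : ℝ => Real.arccos (-(d * lam^2 * th^2 + (N:ℝ)^2 * mu) / ((N:ℝ) * lam * th * (1 + d * mu))))
      ((-(1 / Real.sqrt (1 - x^2))) * ((-(lam^2*th^2) * ((N:ℝ) * lam * th * (1 + d * mu)) - -(d * lam^2 * th^2 + (N:ℝ)^2 * mu) * ((N:ℝ)*lam*th*mu)) / ((N:ℝ) * lam * th * (1 + d * mu))^2)) d :=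
    HasDerivAt.comp (h₂ := Real.arccos) d (Real.hasDerivAt_arccos hxgt.ne' hxlt.ne) hg
  have hq : HasDerivAt (fun d : ℝ => ((N:ℝ)^2 - d^2 * lam^2 * th^2) / (lam^2 * th^2 - (N:ℝ)^2 * mu^2))
      ((-(2 * d * (lam^2 * th^2))) / (lam^2 * th^2 - (N:ℝ)^2 * mu^2)) d := by
    have h3 : HasDerivAt (fun d : ℝ => d^2) (2*d) d := by simpa using hasDerivAt_pow 2 d
    have : HasDerivAt (fun d : ℝ => (N:ℝ)^2 - d^2 * lam^2 * th^2) (-(2 * d * (lam^2 * th^2))) d := by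
      simpa [mul_assoc] using (h3.mul_const (lam^2*th^2)).const_sub ((N:ℝ)^2)
    exact this.div_const _
  have hqpos : 0 < ((N:ℝ)^2 - d^2 * lam^2 * th^2) / (lam^2 * th^2 - (N:ℝ)^2 * mu^2) := div_pos hh hK
  have hS : HasDerivAt (fun d : ℝ => Real.sqrt (((N:ℝ)^2 - d^2 * lam^2 * th^2) / (lam^2 * th^2 - (N:ℝ)^2 * mu^2)))
      (1 / (2 * Real.sqrt (((N:ℝ)^2 - d^2 * lam^2 * th^2) / (lam^2 * th^2 - (N:ℝ)^2 * mu^2))) * ((-(2 * d * (lam^2 * th^2))) / (lam^2 * th^2 - (N:ℝ)^2 * mu^2))) d :=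
    (Real.hasDerivAt_sqrt hqpos.ne').comp d hq
  have hD := hA.mul hS
  have hDcr : Dcr lam mu th N = fun d : ℝ =>
      Real.arccos (-(d * lam^2 * th^2 + (N:ℝ)^2 * mu) / ((N:ℝ) * lam * th * (1 + d * mu))) *
      Real.sqrt (((N:ℝ)^2 - d^2 * lam^2 * th^2) / (lam^2 * th^2 - (N:ℝ)^2 * mu^2)) := rfl
  rw [hDcr]
  refine hD.congr_deriv (Eq.symm ?_)
  have e2 : Real.sqrt (((N:ℝ)^2 - d^2 * lam^2 * th^2) / (lam^2 * th^2 - (N:ℝ)^2 * mu^2))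
      = Real.sqrt ((N:ℝ)^2 - d^2 * lam^2 * th^2) / Real.sqrt (lam^2 * th^2 - (N:ℝ)^2 * mu^2) :=
    Real.sqrt_div hh.le _
  have e1 : Real.sqrt (1 - x^2)
      = Real.sqrt ((N:ℝ)^2 - d^2 * lam^2 * th^2) * Real.sqrt (lam^2 * th^2 - (N:ℝ)^2 * mu^2) / ((N:ℝ) * lam * th * (1 + d * mu)) := by
    have hsq : (Real.sqrt ((N:ℝ)^2 - d^2 * lam^2 * th^2) * Real.sqrt (lam^2 * th^2 - (N:ℝ)^2 * mu^2) / ((N:ℝ) * lam * th * (1 + d * mu)))^2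
        = ((N:ℝ)^2 - d^2 * lam^2 * th^2) * (lam^2 * th^2 - (N:ℝ)^2 * mu^2) / ((N:ℝ) * lam * th * (1 + d * mu))^2 := by
      rw [div_pow, mul_pow, Real.sq_sqrt hh.le, Real.sq_sqrt hK.le]
    have hxe : 1 - x^2 = (Real.sqrt ((N:ℝ)^2 - d^2 * lam^2 * th^2) * Real.sqrt (lam^2 * th^2 - (N:ℝ)^2 * mu^2) / ((N:ℝ) * lam * th * (1 + d * mu)))^2 := by
      rw [hx, hsq]
      field_simp
      ring
    rw [hxe, Real.sqrt_sq (by positivity)]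
  have hshpos : 0 < Real.sqrt ((N:ℝ)^2 - d^2 * lam^2 * th^2) := Real.sqrt_pos.mpr hh
  have hscpos : 0 < Real.sqrt (lam^2 * th^2 - (N:ℝ)^2 * mu^2) := Real.sqrt_pos.mpr hK
  have hs2 : Real.sqrt ((N:ℝ)^2 - d^2 * lam^2 * th^2) ^ 2 = (N:ℝ)^2 - d^2 * lam^2 * th^2 := Real.sq_sqrt hh.le
  have hc2 : Real.sqrt (lam^2 * th^2 - (N:ℝ)^2 * mu^2) ^ 2 = lam^2 * th^2 - (N:ℝ)^2 * mu^2 := Real.sq_sqrt hK.le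
  simp only [e2, e1]
  generalize harc : Real.arccos (-(d * lam^2 * th^2 + (N:ℝ)^2 * mu) / ((N:ℝ) * lam * th * (1 + d * mu))) = A
  generalize hsv : Real.sqrt ((N:ℝ)^2 - d^2 * lam^2 * th^2) = s
  generalize hcv : Real.sqrt (lam^2 * th^2 - (N:ℝ)^2 * mu^2) = c
  have hs2' : s^2 = (N:ℝ)^2 - d^2 * lam^2 * th^2 := hsv ▸ hs2
  have hc2' : c^2 = lam^2 * th^2 - (N:ℝ)^2 * mu^2 := hcv ▸ hc2
  have hspos : 0 < s := hsv ▸ hshpos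
  have hcpos : 0 < c := hcv ▸ hscpos
  rw [← hs2', ← hc2']
  field_simp
  linear_combination s * hc2'

section Aux
variable (lam mu th : ℝ) (N : ℕ)

lemma Dcr_cont (hlam : 0 < lam) (hmu : 0 < mu) (hth : 0 < th) (hN : 0 < N) :
    ContinuousOn (Dcr lam mu th N) (Set.Ici 0) := by
  have hb : 0 < lam * th := mul_pos hlam hth
  have hNpos : (0:ℝ) < N := Nat.cast_pos.mpr hN
  apply ContinuousOn.mul
  · apply Real.continuous_arccos.comp_continuousOn
    apply ContinuousOn.div
    · exact (Continuous.continuousOn (by continuity))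
    · exact (Continuous.continuousOn (by continuity))
    · intro d hd
      have : (0:ℝ) < (N:ℝ) * lam * th * (1 + d * mu) := by
        have : (0:ℝ) ≤ d := hd
        positivity
      exact this.ne'
  · exact Real.continuous_sqrt.comp_continuousOn
      (ContinuousOn.div_const (Continuous.continuousOn (by continuity)) _)

lemma Dcr_endpoint (hlam : 0 < lam) (hth : 0 < th) :
    Dcr lam mu th N ((N:ℝ)/(lam*th)) = 0 := by
  have hb : lam * th ≠ 0 := (mul_pos hlam hth).ne'
  have h0 : ((N:ℝ)^2 - ((N:ℝ)/(lam*th))^2 * lam^2 * th^2) / (lam^2 * th^2 - (N:ℝ)^2 * mu^2) = 0 := by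
    rw [div_eq_zero_iff]; left; field_simp; ring
  rw [Dcr, h0, Real.sqrt_zero, mul_zero]

lemma Dcr_zero_pos (hlam : 0 < lam) (hmu : 0 < mu) (hth : 0 < th) (hN : 0 < N)
    (hgt : lam * th > N * mu) :
    0 < Dcr lam mu th N 0 := by
  have hb : 0 < lam * th := mul_pos hlam hth
  have hNpos : (0:ℝ) < N := Nat.cast_pos.mpr hN
  have hK : 0 < lam^2 * th^2 - (N:ℝ)^2 * mu^2 := by nlinarith [mul_pos hNpos hmu]
  rw [Dcr]
  apply mul_pos
  · apply Real.arccos_pos.mpr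
    have hw : (0:ℝ) < (N:ℝ) * lam * th * (1 + 0 * mu) := by norm_num; positivity
    rw [div_lt_one hw]
    nlinarith [mul_pos hNpos hmu, mul_pos (mul_pos hNpos hlam) hth]
  · apply Real.sqrt_pos.mpr
    apply div_pos _ hK
    norm_num
    positivity

end Aux

set_option maxHeartbeats 1000000 in
theorem Dcr_max_exists
    (lam mu th : ℝ) (N : ℕ) (hN : 0 < N)
    (hlam : 0 < lam) (hmu : 0 < mu) (hth : 0 < th)
    (hgt : lam * th > N * mu) :
    deriv (Dcr lam mu th N) 0 = 1
    ∧ Tendsto (deriv (Dcr lam mu th N))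
        (nhdsWithin ((N : ℝ) / (lam * th)) (Set.Iio ((N : ℝ) / (lam * th)))) atBot
    ∧ ∃ dmax ∈ Set.Ioo (0 : ℝ) ((N : ℝ) / (lam * th)),
        (∀ d ∈ Set.Ico (0 : ℝ) ((N : ℝ) / (lam * th)),
          Dcr lam mu th N d ≤ Dcr lam mu th N dmax)
        ∧ Real.sqrt ((N : ℝ)^2 - dmax^2 * lam^2 * th^2) / (1 + dmax * mu)
            = dmax * lam^2 * th^2 / Real.sqrt (lam^2 * th^2 - (N : ℝ)^2 * mu^2) *
              Real.arccos (-(dmax * lam^2 * th^2 + (N : ℝ)^2 * mu)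
                / ((N : ℝ) * lam * th * (1 + dmax * mu))) := by
  have hb : 0 < lam * th := mul_pos hlam hth
  have hNpos : (0:ℝ) < N := Nat.cast_pos.mpr hN
  set L : ℝ := (N:ℝ)/(lam*th) with hLdef
  have hLpos : 0 < L := by positivity
  have hm1 : -(1/mu) < (0:ℝ) := neg_lt_zero.mpr (by positivity)
  have hm2 : -L < (0:ℝ) := neg_lt_zero.mpr hLpos
  have hK : 0 < lam^2*th^2 - (N:ℝ)^2*mu^2 := by nlinarith [mul_pos hNpos hmu]
  have hLsq : (N:ℝ)^2 - L^2*lam^2*th^2 = 0 := by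
    rw [hLdef]; field_simp; ring
  have hhpos : ∀ d : ℝ, -L < d → d < L → 0 < (N:ℝ)^2 - d^2*lam^2*th^2 := by
    intro d h1 h2
    have e1 : d * (lam * th) < N := (lt_div_iff₀ hb).mp h2
    have e2 : -(N:ℝ) < d * (lam * th) := by
      have : (-(N:ℝ))/(lam*th) < d := by rw [neg_div]; exact h1
      have := (div_lt_iff₀ hb).mp this; linarith
    nlinarith
  -- part 1
  have hd0 : HasDerivAt (Dcr lam mu th N) 1 0 := by
    have h := Dcr_hasDerivAt lam mu th N hN hlam hmu hth hgt 0 hm1 hm2 hLpos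
    convert h using 1
    norm_num
  refine ⟨hd0.deriv, ?_, ?_⟩
  · -- part 2 : tendsto atBot
    have hformula : (deriv (Dcr lam mu th N)) =ᶠ[nhdsWithin L (Set.Iio L)]
        (fun d => 1/(1+d*mu) - d*lam^2*th^2 * Dcr lam mu th N d / ((N:ℝ)^2 - d^2*lam^2*th^2)) := by
      filter_upwards [Ioo_mem_nhdsLT_of_mem (⟨hLpos, le_refl L⟩ : L ∈ Ioc 0 L)] with d hd
      exact (Dcr_hasDerivAt lam mu th N hN hlam hmu hth hgt d (by linarith [hd.1])
        (by linarith [hd.1]) hd.2).deriv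
    rw [tendsto_congr' hformula]
    have harccos_t : Tendsto
        (fun d : ℝ => Real.arccos (-(d * lam^2 * th^2 + (N:ℝ)^2 * mu) / ((N:ℝ) * lam * th * (1 + d * mu))))
        (nhdsWithin L (Set.Iio L)) (𝓝 π) := by
      have hvL : ((N:ℝ)*lam*th*(1+L*mu)) ≠ 0 := by positivity
      have hcont : ContinuousAt
          (fun d : ℝ => Real.arccos (-(d * lam^2 * th^2 + (N:ℝ)^2 * mu) / ((N:ℝ) * lam * th * (1 + d * mu)))) L := by
        apply Real.continuous_arccos.continuousAt.comp
        exact ContinuousAt.div (by fun_prop) (by fun_prop) hvL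
      have hxL : -(L * lam^2 * th^2 + (N:ℝ)^2 * mu) / ((N:ℝ) * lam * th * (1 + L * mu)) = -1 := by
        rw [hLdef]; rw [div_eq_iff (by rw [← hLdef]; exact hvL)]; field_simp
      have := hcont.tendsto.mono_left (nhdsWithin_le_nhds (s := Iio L))
      rw [hxL, Real.arccos_neg_one] at this
      exact this
    have hsq_t : Tendsto (fun d : ℝ => Real.sqrt ((N:ℝ)^2 - d^2*lam^2*th^2)) (nhdsWithin L (Set.Iio L)) (𝓝[>] 0) := by
      rw [tendsto_nhdsWithin_iff]
      constructor
      · have hc : Continuous (fun d : ℝ => Real.sqrt ((N:ℝ)^2 - d^2*lam^2*th^2)) := by continuity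
        have := (hc.tendsto L).mono_left (nhdsWithin_le_nhds (s := Iio L))
        rw [hLsq, Real.sqrt_zero] at this
        exact this
      · filter_upwards [Ioo_mem_nhdsLT_of_mem (⟨hLpos, le_refl L⟩ : L ∈ Ioc 0 L)] with d hd
        exact Real.sqrt_pos.mpr (hhpos d (by linarith [hd.1]) hd.2)
    have hu_t : Tendsto
        (fun d : ℝ => d * lam^2 * th^2 * Real.arccos (-(d * lam^2 * th^2 + (N:ℝ)^2 * mu) / ((N:ℝ) * lam * th * (1 + d * mu))) / Real.sqrt (lam^2*th^2 - (N:ℝ)^2*mu^2))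
        (nhdsWithin L (Set.Iio L)) (𝓝 (L * lam^2 * th^2 * π / Real.sqrt (lam^2*th^2 - (N:ℝ)^2*mu^2))) := by
      have hid : Tendsto (fun d : ℝ => d * lam^2 * th^2) (nhdsWithin L (Set.Iio L)) (𝓝 (L * lam^2 * th^2)) :=
        (Continuous.tendsto (by continuity) L).mono_left (nhdsWithin_le_nhds (s := Iio L))
      exact (hid.mul harccos_t).div_const _
    have hC : 0 < L * lam^2 * th^2 * π / Real.sqrt (lam^2*th^2 - (N:ℝ)^2*mu^2) := by
      have := Real.pi_pos
      have := Real.sqrt_pos.mpr hK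
      positivity
    have hmain : Tendsto
        (fun d : ℝ => (d * lam^2 * th^2 * Real.arccos (-(d * lam^2 * th^2 + (N:ℝ)^2 * mu) / ((N:ℝ) * lam * th * (1 + d * mu))) / Real.sqrt (lam^2*th^2 - (N:ℝ)^2*mu^2)) * (Real.sqrt ((N:ℝ)^2 - d^2*lam^2*th^2))⁻¹)
        (nhdsWithin L (Set.Iio L)) atTop :=
      Filter.Tendsto.pos_mul_atTop hC hu_t hsq_t.inv_tendsto_nhdsGT_zero
    have h1t : Tendsto (fun d : ℝ => 1/(1+d*mu)) (nhdsWithin L (Set.Iio L)) (𝓝 (1/(1+L*mu))) := by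
      have hvL : (1+L*mu) ≠ 0 := by positivity
      have hca : ContinuousAt (fun d : ℝ => 1/(1+d*mu)) L :=
        ContinuousAt.div continuousAt_const
          (continuousAt_const.add (continuousAt_id.mul continuousAt_const)) hvL
      exact hca.tendsto.mono_left (nhdsWithin_le_nhds (s := Iio L))
    have hfinal := h1t.add_atBot (tendsto_neg_atTop_atBot.comp hmain)
    apply Tendsto.congr' _ hfinal
    filter_upwards [Ioo_mem_nhdsLT_of_mem (⟨hLpos, le_refl L⟩ : L ∈ Ioc 0 L)] with d hd
    have hh : 0 < (N:ℝ)^2 - d^2*lam^2*th^2 := hhpos d (by linarith [hd.1]) hd.2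
    have hs : 0 < Real.sqrt ((N:ℝ)^2 - d^2*lam^2*th^2) := Real.sqrt_pos.mpr hh
    have hc : 0 < Real.sqrt (lam^2*th^2 - (N:ℝ)^2*mu^2) := Real.sqrt_pos.mpr hK
    have hs2 : Real.sqrt ((N:ℝ)^2 - d^2*lam^2*th^2) ^ 2 = (N:ℝ)^2 - d^2*lam^2*th^2 := Real.sq_sqrt hh.le
    simp only [Function.comp_apply]
    rw [Dcr, Real.sqrt_div hh.le, sub_eq_add_neg]
    congr 1
    set A := Real.arccos (-(d * lam^2*th^2 + (N:ℝ)^2*mu) / ((N:ℝ)*lam*th*(1+d*mu))) with hAd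
    set s := Real.sqrt ((N:ℝ)^2 - d^2*lam^2*th^2) with hsv
    set c := Real.sqrt (lam^2*th^2 - (N:ℝ)^2*mu^2) with hcv
    have hs2' : s^2 = (N:ℝ)^2 - d^2*lam^2*th^2 := Real.sq_sqrt hh.le
    rw [← hs2']
    field_simp
  · -- part 3 : max
    obtain ⟨dm, hdmIcc, hmax⟩ := isCompact_Icc.exists_isMaxOn (s := Icc (0:ℝ) L)
      ⟨0, le_refl 0, hLpos.le⟩
      ((Dcr_cont lam mu th N hlam hmu hth hN).mono (fun y hy => hy.1))
    have hmax' : ∀ d ∈ Icc (0:ℝ) L, Dcr lam mu th N d ≤ Dcr lam mu th N dm := fun d hd => hmax hd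
    have hDL : Dcr lam mu th N L = 0 := Dcr_endpoint lam mu th N hlam hth
    have hD0 : 0 < Dcr lam mu th N 0 := Dcr_zero_pos lam mu th N hlam hmu hth hN hgt
    have hdmlt : dm < L := by
      rcases lt_or_eq_of_le hdmIcc.2 with h | h
      · exact h
      · exfalso
        have := hmax' 0 ⟨le_refl 0, hLpos.le⟩
        rw [h, hDL] at this
        linarith
    have hdmpos : 0 < dm := by
      rcases lt_or_eq_of_le hdmIcc.1 with h | h
      · exact h
      · exfalso
        have hslope : Tendsto (slope (Dcr lam mu th N) 0) (nhdsWithin (0:ℝ) (Set.Ioi 0)) (𝓝 1) :=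
          (hasDerivAt_iff_tendsto_slope.mp hd0).mono_left
            (nhdsWithin_mono 0 (fun y hy => Set.mem_compl_singleton_iff.mpr (ne_of_gt hy)))
        have h1 : ∀ᶠ y in nhdsWithin (0:ℝ) (Set.Ioi 0), 0 < slope (Dcr lam mu th N) 0 y :=
          hslope.eventually (eventually_gt_nhds zero_lt_one)
        have h2 : Ioo (0:ℝ) L ∈ nhdsWithin (0:ℝ) (Set.Ioi 0) := Ioo_mem_nhdsGT_of_mem ⟨le_refl 0, hLpos⟩
        obtain ⟨y, hy1, hy2⟩ := (h1.and (eventually_of_mem h2 (fun y hy => hy))).exists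
        rw [slope_def_field] at hy1
        have hynum : 0 < Dcr lam mu th N y - Dcr lam mu th N 0 := by
          rcases div_pos_iff.mp hy1 with ⟨ha, _⟩ | ⟨_, hb2⟩
          · linarith
          · linarith [hy2.1]
        have := hmax' y ⟨hy2.1.le, hy2.2.le⟩
        rw [← h] at this
        linarith
    have hder := Dcr_hasDerivAt lam mu th N hN hlam hmu hth hgt dm
      (by linarith) (by linarith) hdmlt
    have hzero : (1/(1+dm*mu) - dm*lam^2*th^2 * Dcr lam mu th N dm / ((N:ℝ)^2 - dm^2*lam^2*th^2)) = 0 :=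
      (hmax.isLocalMax (Icc_mem_nhds hdmpos hdmlt)).hasDerivAt_eq_zero hder
    refine ⟨dm, ⟨hdmpos, hdmlt⟩, fun d hd => hmax' d ⟨hd.1, hd.2.le⟩, ?_⟩
    have hh : 0 < (N:ℝ)^2 - dm^2*lam^2*th^2 := hhpos dm (by linarith) hdmlt
    have hv : 0 < 1 + dm*mu := by positivity
    have hs : 0 < Real.sqrt ((N:ℝ)^2 - dm^2*lam^2*th^2) := Real.sqrt_pos.mpr hh
    have hc : 0 < Real.sqrt (lam^2*th^2 - (N:ℝ)^2*mu^2) := Real.sqrt_pos.mpr hK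
    have hs2 : Real.sqrt ((N:ℝ)^2 - dm^2*lam^2*th^2) ^ 2 = (N:ℝ)^2 - dm^2*lam^2*th^2 := Real.sq_sqrt hh.le
    have hc2 : Real.sqrt (lam^2*th^2 - (N:ℝ)^2*mu^2) ^ 2 = lam^2*th^2 - (N:ℝ)^2*mu^2 := Real.sq_sqrt hK.le
    rw [Dcr, Real.sqrt_div hh.le] at hzero
    set A := Real.arccos (-(dm * lam^2*th^2 + (N:ℝ)^2*mu) / ((N:ℝ)*lam*th*(1+dm*mu))) with hAd
    set s := Real.sqrt ((N:ℝ)^2 - dm^2*lam^2*th^2) with hsv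
    set c := Real.sqrt (lam^2*th^2 - (N:ℝ)^2*mu^2) with hcv
    have hs2' : s^2 = (N:ℝ)^2 - dm^2*lam^2*th^2 := Real.sq_sqrt hh.le
    have e : 1/(1+dm*mu) = dm*lam^2*th^2 * (A * (s/c)) / ((N:ℝ)^2 - dm^2*lam^2*th^2) := by
      linarith [hzero]
    have hrw : s/(1+dm*mu) = s * (1/(1+dm*mu)) := by ring
    rw [hrw, e, ← hs2']
    field_simp
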